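/- In the setting of independent mean-zero errors with variance σ², suppose the estimate β̂ (possibly random via ε) satisfies β̂ = ‖β̂‖ξ* with ξ* = β*/α*, α* = ‖β*‖. Then the expected modified squared prediction error E[(ε₀ − x_kᵀξ*·(ξ*ᵀXᵀε)/(ξ*ᵀXᵀXξ*))²] is less than or equal to the expected unmodified squared prediction error E[(ε₀ − x_kᵀξ*(‖β̂‖ − α*))²] if and only if σ²/(ξ*ᵀXᵀXξ*) ≤ E[(‖β̂‖ − α*)²] (when x_kᵀξ* ≠ 0), equivalently α*²/E[(‖β̂‖−α*)²] ≤ β*ᵀXᵀXβ*/σ². -/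

import Mathlib

open Matrix MeasureTheory ProbabilityTheory

/-- With independent mean-zero variance-`σ²` errors and `β̂ = ‖β̂‖ξ*`, `ξ* = β*/α*`,
the expected modified squared prediction error is `≤` the expected unmodified one
iff `σ²/(ξ*ᵀXᵀXξ*) ≤ E[(‖β̂‖ − α*)²]`, equivalently
`α*²/E[(‖β̂‖−α*)²] ≤ β*ᵀXᵀXβ*/σ²`. -/
theorem mod_ape_le_ape_iff {n p : ℕ}
    (X : Matrix (Fin n) (Fin p) ℝ) (βs : Fin p → ℝ) (hβs : βs ≠ 0)
    (αs : ℝ) (hαs : αs = Real.sqrt (βs ⬝ᵥ βs))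
    (ξ : Fin p → ℝ) (hξ : ξ = αs⁻¹ • βs) (hXξ : X.mulVec ξ ≠ 0)
    (xk : Fin p → ℝ) (hxk : xk ⬝ᵥ ξ ≠ 0)
    (σ : ℝ) (hσ : 0 < σ)
    {Ω : Type*} [MeasurableSpace Ω] (μ : Measure Ω) [IsProbabilityMeasure μ]
    (ε : Ω → Fin n → ℝ) (ε₀ : Ω → ℝ) (c : Ω → ℝ)
    (hmeas : Measurable ε) (hmeas₀ : Measurable ε₀) (hmeasc : Measurable c)
    (hint : ∀ i, Integrable (fun ω => ε ω i) μ)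
    (hint2 : ∀ i j, Integrable (fun ω => ε ω i * ε ω j) μ)
    (hmean : ∀ i, ∫ ω, ε ω i ∂μ = 0)
    (hcov : ∀ i j, ∫ ω, ε ω i * ε ω j ∂μ = if i = j then σ ^ 2 else 0)
    (hint₀ : Integrable ε₀ μ) (hint₀2 : Integrable (fun ω => ε₀ ω ^ 2) μ)
    (hmean₀ : ∫ ω, ε₀ ω ∂μ = 0) (hvar₀ : ∫ ω, ε₀ ω ^ 2 ∂μ = σ ^ 2)
    (hindep : IndepFun ε₀ (fun ω => (ε ω, c ω)) μ)
    (hintc : Integrable (fun ω => (c ω - αs) ^ 2) μ)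
    (hEpos : 0 < ∫ ω, (c ω - αs) ^ 2 ∂μ)
    (hintPE : Integrable (fun ω => (ε₀ ω - (xk ⬝ᵥ ξ) * (c ω - αs)) ^ 2) μ)
    (hintMod : Integrable (fun ω =>
      (ε₀ ω - (xk ⬝ᵥ ξ) * ((X.mulVec ξ ⬝ᵥ ε ω) / (X.mulVec ξ ⬝ᵥ X.mulVec ξ))) ^ 2) μ) :
    ((∫ ω, (ε₀ ω - (xk ⬝ᵥ ξ) *
        ((X.mulVec ξ ⬝ᵥ ε ω) / (X.mulVec ξ ⬝ᵥ X.mulVec ξ))) ^ 2 ∂μ ≤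
      ∫ ω, (ε₀ ω - (xk ⬝ᵥ ξ) * (c ω - αs)) ^ 2 ∂μ) ↔
      σ ^ 2 / (X.mulVec ξ ⬝ᵥ X.mulVec ξ) ≤ ∫ ω, (c ω - αs) ^ 2 ∂μ) ∧
    ((σ ^ 2 / (X.mulVec ξ ⬝ᵥ X.mulVec ξ) ≤ ∫ ω, (c ω - αs) ^ 2 ∂μ) ↔
      αs ^ 2 / (∫ ω, (c ω - αs) ^ 2 ∂μ) ≤
        (X.mulVec βs ⬝ᵥ X.mulVec βs) / σ ^ 2) := by
  set v := X.mulVec ξ with hv_def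
  set Q := v ⬝ᵥ v with hQ_def
  set a := xk ⬝ᵥ ξ with ha_def
  set E := ∫ ω, (c ω - αs) ^ 2 ∂μ with hE_def
  have hQ : 0 < Q := by
    refine (Finset.sum_nonneg fun i _ => mul_self_nonneg _).lt_of_ne fun h => hXξ ?_
    exact dotProduct_self_eq_zero.mp h.symm
  have hb : 0 < βs ⬝ᵥ βs := by
    refine (Finset.sum_nonneg fun i _ => mul_self_nonneg _).lt_of_ne fun h => hβs ?_
    exact dotProduct_self_eq_zero.mp h.symm
  have hαs2 : 0 < αs := hαs ▸ Real.sqrt_pos.mpr hb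
  have ha2 : 0 < a ^ 2 := (sq_nonneg a).lt_of_ne (Ne.symm (pow_ne_zero 2 hxk))
  have hσ2 : 0 < σ ^ 2 := by positivity
  -- independence facts
  have hmv : Measurable (fun z : (Fin n → ℝ) × ℝ => v ⬝ᵥ z.1) := by
    simp only [dotProduct]
    exact Finset.measurable_sum _ fun i _ =>
      measurable_const.mul ((measurable_pi_apply i).comp measurable_fst)
  have hIε : IndepFun ε₀ (fun ω => v ⬝ᵥ ε ω) μ := hindep.comp measurable_id hmv
  have hIc : IndepFun ε₀ (fun ω => c ω - αs) μ :=
    hindep.comp measurable_id (measurable_snd.sub measurable_const)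
  -- integrability
  have hintVE : Integrable (fun ω => v ⬝ᵥ ε ω) μ := by
    simp only [dotProduct]
    exact integrable_finset_sum _ fun i _ => (hint i).const_mul _
  have hintc1 : Integrable (fun ω => c ω - αs) μ := by
    have h2 : MemLp (fun ω => c ω - αs) 2 μ :=
      (memLp_two_iff_integrable_sq
        ((hmeasc.sub measurable_const).aestronglyMeasurable)).mpr hintc
    exact h2.integrable one_le_two
  have hsq : ∀ ω, (v ⬝ᵥ ε ω) ^ 2 = ∑ i, ∑ j, (v i * v j) * (ε ω i * ε ω j) := by
    intro ω
    simp only [dotProduct, sq, Finset.sum_mul_sum]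
    exact Finset.sum_congr rfl fun i _ => Finset.sum_congr rfl fun j _ => by ring
  have hintVE2 : Integrable (fun ω => (v ⬝ᵥ ε ω) ^ 2) μ := by
    simp only [hsq]
    exact integrable_finset_sum _ fun i _ =>
      integrable_finset_sum _ fun j _ => (hint2 i j).const_mul _
  have hi2 : Integrable (fun ω => ε₀ ω * (v ⬝ᵥ ε ω)) μ := hIε.integrable_mul hint₀ hintVE
  have hi3 : Integrable (fun ω => ε₀ ω * (c ω - αs)) μ := hIc.integrable_mul hint₀ hintc1
  -- key integrals
  have IVE : ∫ ω, v ⬝ᵥ ε ω ∂μ = 0 := by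
    simp only [dotProduct]
    rw [integral_finset_sum _ fun i _ => (hint i).const_mul _]
    simp [integral_const_mul, hmean]
  have I1 : ∫ ω, (v ⬝ᵥ ε ω) ^ 2 ∂μ = σ ^ 2 * Q := by
    have h1 : ∫ ω, (v ⬝ᵥ ε ω) ^ 2 ∂μ = ∑ i, ∑ j, (v i * v j) * ∫ ω, ε ω i * ε ω j ∂μ := by
      simp only [hsq]
      rw [integral_finset_sum _ fun i _ =>
        integrable_finset_sum _ fun j _ => (hint2 i j).const_mul _]
      refine Finset.sum_congr rfl fun i _ => ?_
      rw [integral_finset_sum _ fun j _ => (hint2 i j).const_mul _]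
      exact Finset.sum_congr rfl fun j _ => integral_const_mul _ _
    rw [h1]
    simp only [hcov, mul_ite, mul_zero, Finset.sum_ite_eq, Finset.mem_univ, if_true]
    rw [hQ_def]
    simp only [dotProduct, Finset.mul_sum]
    exact Finset.sum_congr rfl fun i _ => by ring
  have I2 : ∫ ω, ε₀ ω * (v ⬝ᵥ ε ω) ∂μ = 0 := by
    have h : (fun ω => ε₀ ω * (v ⬝ᵥ ε ω)) = ε₀ * fun ω => v ⬝ᵥ ε ω := rfl
    calc ∫ ω, ε₀ ω * (v ⬝ᵥ ε ω) ∂μ = integral μ (ε₀ * fun ω => v ⬝ᵥ ε ω) := by rw [← h]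
    _ = 0 := by rw [hIε.integral_mul_eq_mul_integral hint₀.1 hintVE.1, hmean₀, zero_mul]
  have I3 : ∫ ω, ε₀ ω * (c ω - αs) ∂μ = 0 := by
    have h : (fun ω => ε₀ ω * (c ω - αs)) = ε₀ * fun ω => c ω - αs := rfl
    calc ∫ ω, ε₀ ω * (c ω - αs) ∂μ = integral μ (ε₀ * fun ω => c ω - αs) := by rw [← h]
    _ = 0 := by rw [hIc.integral_mul_eq_mul_integral hint₀.1 hintc1.1, hmean₀, zero_mul]
  -- the two expectations
  have Emod : ∫ ω, (ε₀ ω - a * ((v ⬝ᵥ ε ω) / Q)) ^ 2 ∂μ = σ ^ 2 + a ^ 2 * (σ ^ 2 / Q) := by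
    have hexp : ∀ ω, (ε₀ ω - a * ((v ⬝ᵥ ε ω) / Q)) ^ 2
        = ε₀ ω ^ 2 - (2 * a / Q) * (ε₀ ω * (v ⬝ᵥ ε ω)) + (a / Q) ^ 2 * (v ⬝ᵥ ε ω) ^ 2 :=
      fun ω => by ring
    have hiB : Integrable (fun ω => (2 * a / Q) * (ε₀ ω * (v ⬝ᵥ ε ω))) μ := hi2.const_mul _
    have hiC : Integrable (fun ω => (a / Q) ^ 2 * (v ⬝ᵥ ε ω) ^ 2) μ := hintVE2.const_mul _
    have hiA : Integrable (fun ω => ε₀ ω ^ 2 - (2 * a / Q) * (ε₀ ω * (v ⬝ᵥ ε ω))) μ :=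
      hint₀2.sub hiB
    simp_rw [hexp]
    rw [integral_add hiA hiC, integral_sub hint₀2 hiB, integral_const_mul, integral_const_mul,
      I2, I1, hvar₀]
    field_simp
    ring
  have Eun : ∫ ω, (ε₀ ω - a * (c ω - αs)) ^ 2 ∂μ = σ ^ 2 + a ^ 2 * E := by
    have hexp : ∀ ω, (ε₀ ω - a * (c ω - αs)) ^ 2
        = ε₀ ω ^ 2 - (2 * a) * (ε₀ ω * (c ω - αs)) + a ^ 2 * (c ω - αs) ^ 2 :=
      fun ω => by ring
    have hiB : Integrable (fun ω => (2 * a) * (ε₀ ω * (c ω - αs))) μ := hi3.const_mul _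
    have hiC : Integrable (fun ω => a ^ 2 * (c ω - αs) ^ 2) μ := hintc.const_mul _
    have hiA : Integrable (fun ω => ε₀ ω ^ 2 - (2 * a) * (ε₀ ω * (c ω - αs))) μ :=
      hint₀2.sub hiB
    simp_rw [hexp]
    rw [integral_add hiA hiC, integral_sub hint₀2 hiB, integral_const_mul, integral_const_mul,
      I3, hvar₀, hE_def]
    ring
  have hβξ : βs = αs • ξ := by
    rw [hξ, smul_smul, mul_inv_cancel₀ hαs2.ne', one_smul]
  have hXβ : X.mulVec βs ⬝ᵥ X.mulVec βs = αs ^ 2 * Q := by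
    rw [hβξ, mulVec_smul, smul_dotProduct, dotProduct_smul, smul_eq_mul, smul_eq_mul,
      hQ_def]
    ring
  constructor
  · rw [Emod, Eun, add_le_add_iff_left, mul_le_mul_iff_right₀ ha2]
  · rw [hXβ, div_le_iff₀ hQ, div_le_div_iff₀ hEpos hσ2]
    constructor <;> intro h <;> nlinarith [pow_pos hαs2 2,
      mul_le_mul_of_nonneg_left h (pow_pos hαs2 2).le]
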